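/- Let ε > 0, L > 0, and let λ satisfy ε/2 < λ < ε and e^{2λL}·(2λ − ε) = ε. Then there exists a linear bound state ψ (for parameters ε, L, λ) that is not identically zero, is even (ψ(−x) = ψ(x) for all x), and is strictly positive. -/

import Mathlib

open Filter Topology Set

/-- A linear bound state for the double delta-well problem with parameters
`ε, L, lam`: `ψ` is continuous, decays at `±∞`, has derivative `ψ'` and satisfies
`ψ'' = lam² ψ` away from `±L`, and the one-sided limits of `ψ'` at `±L` exist and
jump by `-ε ψ`. -/
def IsLinearBoundState (ε L lam : ℝ) (ψ ψ' : ℝ → ℝ) : Prop :=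
  Continuous ψ ∧
  Tendsto ψ atTop (𝓝 0) ∧ Tendsto ψ atBot (𝓝 0) ∧
  (∀ x : ℝ, x ≠ L → x ≠ -L →
    HasDerivAt ψ (ψ' x) x ∧ HasDerivAt ψ' (lam ^ 2 * ψ x) x) ∧
  (∀ x : ℝ, x = L ∨ x = -L →
    ∃ a b : ℝ,
      Tendsto ψ' (𝓝[>] x) (𝓝 a) ∧
      Tendsto ψ' (𝓝[<] x) (𝓝 b) ∧
      a - b = -ε * ψ x)

noncomputable def psiAux (lam L x : ℝ) : ℝ :=
  (Real.exp (lam*x - 2*lam*max (x-L) 0) + Real.exp (-(lam*x) - 2*lam*max (-x-L) 0))/2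

noncomputable def psiAux' (lam L x : ℝ) : ℝ :=
  if x ≤ -L then lam * Real.cosh (lam*L) * Real.exp (lam*(x+L))
  else if x < L then lam * Real.sinh (lam*x)
  else -(lam * Real.cosh (lam*L)) * Real.exp (-(lam*(x-L)))

lemma psiAux_even (lam L x : ℝ) : psiAux lam L (-x) = psiAux lam L x := by
  unfold psiAux
  simp only [neg_neg, mul_neg]
  ring_nf

lemma psiAux_pos (lam L x : ℝ) : 0 < psiAux lam L x := by
  unfold psiAux; positivity

lemma psiAux_mid {lam L x : ℝ} (hx : |x| ≤ L) : psiAux lam L x = Real.cosh (lam*x) := by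
  obtain ⟨h1, h2⟩ := abs_le.mp hx
  rw [psiAux, max_eq_right (by linarith), max_eq_right (by linarith), Real.cosh_eq]
  ring_nf

lemma psiAux_right {lam L x : ℝ} (hL : 0 ≤ L) (hx : L ≤ x) :
    psiAux lam L x = Real.cosh (lam*L) * Real.exp (-(lam*(x-L))) := by
  rw [psiAux, max_eq_left (by linarith), max_eq_right (by linarith), Real.cosh_eq]
  rw [show lam*x - 2*lam*(x-L) = lam*L + -(lam*(x-L)) by ring,
    show -(lam*x) - 2*lam*0 = -(lam*L) + -(lam*(x-L)) by ring,
    Real.exp_add, Real.exp_add]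
  ring

lemma psiAux_left {lam L x : ℝ} (hL : 0 ≤ L) (hx : x ≤ -L) :
    psiAux lam L x = Real.cosh (lam*L) * Real.exp (lam*(x+L)) := by
  rw [← psiAux_even, psiAux_right hL (by linarith)]
  ring_nf

lemma psiAux_continuous (lam L : ℝ) : Continuous (psiAux lam L) := by
  unfold psiAux; fun_prop

lemma hasDerivAt_coshBranch (lam y : ℝ) :
    HasDerivAt (fun z => Real.cosh (lam*z)) (lam * Real.sinh (lam*y)) y := by
  have h := ((hasDerivAt_id y).const_mul lam).cosh
  simpa [mul_comm] using h

lemma hasDerivAt_sinhBranch (lam y : ℝ) :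
    HasDerivAt (fun z => lam * Real.sinh (lam*z)) (lam * (lam * Real.cosh (lam*y))) y := by
  have h := (((hasDerivAt_id y).const_mul lam).sinh).const_mul lam
  simpa [mul_comm, mul_assoc] using h

lemma hasDerivAt_rightBranch (c lam L y : ℝ) :
    HasDerivAt (fun z => -(lam*c) * Real.exp (-(lam*(z-L))))
      (lam^2 * c * Real.exp (-(lam*(y-L)))) y := by
  have h := ((((hasDerivAt_id y).sub_const L).const_mul lam).neg.exp).const_mul (-(lam*c))
  simp only [id_eq, mul_one] at h
  refine h.congr_deriv ?_
  simp only [Pi.neg_apply]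
  ring

lemma hasDerivAt_rightBranch' (c lam L y : ℝ) :
    HasDerivAt (fun z => c * Real.exp (-(lam*(z-L))))
      (-(lam*c) * Real.exp (-(lam*(y-L)))) y := by
  have h := ((((hasDerivAt_id y).sub_const L).const_mul lam).neg.exp).const_mul c
  simp only [id_eq, mul_one] at h
  refine h.congr_deriv ?_
  simp only [Pi.neg_apply]
  ring

lemma hasDerivAt_leftBranch (c lam L y : ℝ) :
    HasDerivAt (fun z => lam*c * Real.exp (lam*(z+L)))
      (lam^2 * c * Real.exp (lam*(y+L))) y := by
  have h := ((((hasDerivAt_id y).add_const L).const_mul lam).exp).const_mul (lam*c)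
  simp only [id_eq, mul_one] at h
  refine h.congr_deriv ?_
  ring

lemma hasDerivAt_leftBranch' (c lam L y : ℝ) :
    HasDerivAt (fun z => c * Real.exp (lam*(z+L)))
      (lam*c * Real.exp (lam*(y+L))) y := by
  have h := ((((hasDerivAt_id y).add_const L).const_mul lam).exp).const_mul c
  simp only [id_eq, mul_one] at h
  refine h.congr_deriv ?_
  ring


theorem exists_symmetric_linear_bound_state (ε L lam : ℝ)
    (hε : 0 < ε) (hL : 0 < L)
    (h1 : ε / 2 < lam) (h2 : lam < ε)
    (h3 : Real.exp (2 * lam * L) * (2 * lam - ε) = ε) :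
    ∃ ψ ψ' : ℝ → ℝ, IsLinearBoundState ε L lam ψ ψ' ∧
      ψ ≠ 0 ∧ (∀ x : ℝ, ψ (-x) = ψ x) ∧ (∀ x : ℝ, 0 < ψ x) := by
  have hlam : 0 < lam := lt_trans (by linarith) h1
  have key : lam * Real.cosh (lam*L) + lam * Real.sinh (lam*L) = ε * Real.cosh (lam*L) := by
    have hE := Real.exp_pos (lam*L)
    have h3' : Real.exp (lam*L) * Real.exp (lam*L) * (2*lam - ε) = ε := by
      rw [← Real.exp_add, show lam*L + lam*L = 2*lam*L by ring]; exact h3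
    rw [Real.cosh_eq, Real.sinh_eq, Real.exp_neg]
    field_simp
    nlinarith [h3', hE]
  refine ⟨psiAux lam L, psiAux' lam L,
    ⟨psiAux_continuous lam L, ?_, ?_, ?_, ?_⟩, ?_, psiAux_even lam L, psiAux_pos lam L⟩
  · -- atTop
    have h0 : Tendsto (fun x : ℝ => x - L) atTop atTop := by
      simpa [sub_eq_add_neg] using tendsto_atTop_add_const_right atTop (-L) tendsto_id
    have h1' : Tendsto (fun x : ℝ => lam*(x-L)) atTop atTop := h0.const_mul_atTop hlam
    have h2' : Tendsto (fun x : ℝ => -(lam*(x-L))) atTop atBot := tendsto_neg_atTop_atBot.comp h1'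
    have h4 : Tendsto (fun x : ℝ => Real.cosh (lam*L) * Real.exp (-(lam*(x-L)))) atTop (𝓝 0) := by
      simpa using (Real.tendsto_exp_atBot.comp h2').const_mul (Real.cosh (lam*L))
    refine Tendsto.congr' ?_ h4
    filter_upwards [eventually_ge_atTop L] with y hy
    exact (psiAux_right hL.le hy).symm
  · -- atBot
    have h0 : Tendsto (fun x : ℝ => x - L) atTop atTop := by
      simpa [sub_eq_add_neg] using tendsto_atTop_add_const_right atTop (-L) tendsto_id
    have h1' : Tendsto (fun x : ℝ => lam*(x-L)) atTop atTop := h0.const_mul_atTop hlam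
    have h2' : Tendsto (fun x : ℝ => -(lam*(x-L))) atTop atBot := tendsto_neg_atTop_atBot.comp h1'
    have h4 : Tendsto (fun x : ℝ => Real.cosh (lam*L) * Real.exp (-(lam*(x-L)))) atTop (𝓝 0) := by
      simpa using (Real.tendsto_exp_atBot.comp h2').const_mul (Real.cosh (lam*L))
    have htop : Tendsto (psiAux lam L) atTop (𝓝 0) := by
      refine Tendsto.congr' ?_ h4
      filter_upwards [eventually_ge_atTop L] with y hy
      exact (psiAux_right hL.le hy).symm
    have := htop.comp tendsto_neg_atBot_atTop
    exact Tendsto.congr (fun x => psiAux_even lam L x) this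
  · -- derivatives
    intro x hxL hxnL
    have hx : x < -L ∨ (-L < x ∧ x < L) ∨ L < x := by
      rcases lt_trichotomy x (-L) with h | h | h
      · exact Or.inl h
      · exact absurd h hxnL
      · rcases lt_trichotomy x L with h' | h' | h'
        · exact Or.inr (Or.inl ⟨h, h'⟩)
        · exact absurd h' hxL
        · exact Or.inr (Or.inr h')
    rcases hx with h | ⟨ha, hb⟩ | h
    · -- left region
      have hmem : Iio (-L) ∈ 𝓝 x := Iio_mem_nhds h
      have hev : psiAux lam L =ᶠ[𝓝 x]
          (fun z => Real.cosh (lam*L) * Real.exp (lam*(z+L))) := by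
        filter_upwards [hmem] with y hy
        exact psiAux_left hL.le (le_of_lt hy)
      have hev' : psiAux' lam L =ᶠ[𝓝 x]
          (fun z => lam * Real.cosh (lam*L) * Real.exp (lam*(z+L))) := by
        filter_upwards [hmem] with y hy
        rw [psiAux', if_pos (le_of_lt hy)]
      constructor
      · have hd := (hasDerivAt_leftBranch' (Real.cosh (lam*L)) lam L x).congr_of_eventuallyEq hev
        rw [show psiAux' lam L x = lam * Real.cosh (lam*L) * Real.exp (lam*(x+L)) from by
          rw [psiAux', if_pos h.le]]
        exact hd
      · have hd := (hasDerivAt_leftBranch (Real.cosh (lam*L)) lam L x).congr_of_eventuallyEq hev'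
        rw [psiAux_left hL.le h.le]
        exact hd.congr_deriv (by ring)
    · -- middle region
      have hmem : Ioo (-L) L ∈ 𝓝 x := Ioo_mem_nhds ha hb
      have hev : psiAux lam L =ᶠ[𝓝 x] (fun z => Real.cosh (lam*z)) := by
        filter_upwards [hmem] with y hy
        exact psiAux_mid (abs_le.mpr ⟨hy.1.le, hy.2.le⟩)
      have hev' : psiAux' lam L =ᶠ[𝓝 x] (fun z => lam * Real.sinh (lam*z)) := by
        filter_upwards [hmem] with y hy
        rw [psiAux', if_neg (by linarith [hy.1]), if_pos hy.2]
      constructor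
      · have hd := (hasDerivAt_coshBranch lam x).congr_of_eventuallyEq hev
        rwa [show psiAux' lam L x = lam * Real.sinh (lam*x) from by
          rw [psiAux', if_neg (by linarith), if_pos hb]]
      · have hd := (hasDerivAt_sinhBranch lam x).congr_of_eventuallyEq hev'
        rw [psiAux_mid (abs_le.mpr ⟨ha.le, hb.le⟩)]
        exact hd.congr_deriv (by ring)
    · -- right region
      have hmem : Ioi L ∈ 𝓝 x := Ioi_mem_nhds h
      have hev : psiAux lam L =ᶠ[𝓝 x]
          (fun z => Real.cosh (lam*L) * Real.exp (-(lam*(z-L)))) := by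
        filter_upwards [hmem] with y hy
        exact psiAux_right hL.le (le_of_lt hy)
      have hev' : psiAux' lam L =ᶠ[𝓝 x]
          (fun z => -(lam * Real.cosh (lam*L)) * Real.exp (-(lam*(z-L)))) := by
        filter_upwards [hmem] with y hy
        have hy' : L < y := hy
        rw [psiAux', if_neg (by linarith), if_neg (by linarith)]
      constructor
      · have hd := (hasDerivAt_rightBranch' (Real.cosh (lam*L)) lam L x).congr_of_eventuallyEq hev
        rw [show psiAux' lam L x = -(lam * Real.cosh (lam*L)) * Real.exp (-(lam*(x-L))) from by
          rw [psiAux', if_neg (by linarith), if_neg (by linarith)]]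
        exact hd
      · have hd := (hasDerivAt_rightBranch (Real.cosh (lam*L)) lam L x).congr_of_eventuallyEq hev'
        rw [psiAux_right hL.le h.le]
        exact hd.congr_deriv (by ring)
  · -- jump conditions
    intro x hx
    rcases hx with h | rfl
    · subst x
      refine ⟨-(lam * Real.cosh (lam*L)), lam * Real.sinh (lam*L), ?_, ?_, ?_⟩
      · have hcont : Tendsto (fun y : ℝ => -(lam * Real.cosh (lam*L)) * Real.exp (-(lam*(y-L))))
            (𝓝 L) (𝓝 (-(lam * Real.cosh (lam*L)))) := by
          have hc : Continuous fun y : ℝ => -(lam * Real.cosh (lam*L)) * Real.exp (-(lam*(y-L))) := by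
            fun_prop
          simpa using hc.tendsto L
        refine (hcont.mono_left nhdsWithin_le_nhds).congr' ?_
        filter_upwards [self_mem_nhdsWithin] with y hy
        have hy' : L < y := hy
        rw [psiAux', if_neg (by linarith), if_neg (by linarith)]
      · have hmem : Ioo (-L) L ∈ 𝓝[<] L := Ioo_mem_nhdsLT_of_mem ⟨by linarith, le_refl L⟩
        have hcont : Tendsto (fun y : ℝ => lam * Real.sinh (lam*y)) (𝓝 L)
            (𝓝 (lam * Real.sinh (lam*L))) := (Continuous.tendsto (by fun_prop) L)
        refine (hcont.mono_left nhdsWithin_le_nhds).congr' ?_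
        filter_upwards [hmem] with y hy
        rw [psiAux', if_neg (by linarith [hy.1]), if_pos hy.2]
      · rw [psiAux_mid (by rw [abs_of_pos hL])]
        linarith [key]
    · refine ⟨lam * Real.sinh (lam*(-L)), lam * Real.cosh (lam*L), ?_, ?_, ?_⟩
      · have hmem : Ioo (-L) L ∈ 𝓝[>] (-L) := Ioo_mem_nhdsGT_of_mem ⟨le_refl _, by linarith⟩
        have hcont : Tendsto (fun y : ℝ => lam * Real.sinh (lam*y)) (𝓝 (-L))
            (𝓝 (lam * Real.sinh (lam*(-L)))) := (Continuous.tendsto (by fun_prop) (-L))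
        refine (hcont.mono_left nhdsWithin_le_nhds).congr' ?_
        filter_upwards [hmem] with y hy
        rw [psiAux', if_neg (by linarith [hy.1]), if_pos hy.2]
      · have hcont : Tendsto (fun y : ℝ => lam * Real.cosh (lam*L) * Real.exp (lam*(y+L)))
            (𝓝 (-L)) (𝓝 (lam * Real.cosh (lam*L))) := by
          have hc : Continuous fun y : ℝ => lam * Real.cosh (lam*L) * Real.exp (lam*(y+L)) := by
            fun_prop
          simpa using hc.tendsto (-L)
        refine (hcont.mono_left nhdsWithin_le_nhds).congr' ?_
        filter_upwards [self_mem_nhdsWithin] with y hy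
        have hy' : y < -L := hy
        rw [psiAux', if_pos hy'.le]
      · have e1 : Real.sinh (lam*(-L)) = -Real.sinh (lam*L) := by
          rw [mul_neg, Real.sinh_neg]
        have e2 : psiAux lam L (-L) = Real.cosh (lam*L) := by
          rw [psiAux_mid (by rw [abs_neg, abs_of_pos hL]), mul_neg, Real.cosh_neg]
        rw [e1, e2]
        linarith [key]
  · -- nonzero
    intro h
    simpa [h] using psiAux_pos lam L 0
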